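/- Let x ∈ {0,1}^∞ satisfy limsup_{n→∞} Σ(x_1...x_n)/n³ > 0. Then there exist a prime binary word η and a nondecreasing sequence of nonnegative integers ℓ_1 ≤ ℓ_2 ≤ ... such that η^{ℓ_n} is a factor of x_1...x_n for all n and limsup_{n→∞} ℓ_n/n > 0. -/

import Mathlib

open Filter

/-- Number of occurrences of `ξ` as a factor of `w` (occurrence at position `i`
means `ξ = w_{i+1}...w_{i+|ξ|}`). -/
def occ (w ξ : List Bool) : ℕ :=
  ((List.range w.length).filter (fun i => ξ.isPrefixOf (w.drop i))).length

/-- `ℓ`-fold concatenation `η^ℓ` of the word `η`. -/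
def wpow (η : List Bool) (ℓ : ℕ) : List Bool := (List.replicate ℓ η).flatten

/-- The Kamae–Xue complexity `Σ(w) = Σ_{ξ ∈ {0,1}^+} |w|_ξ²`.  Since only
factors of `w` contribute nonzero terms, the sum is taken over the (finite) set
of nonempty sublists of `w`, which contains all factors of `w`. -/
def kxSum (w : List Bool) : ℕ :=
  ∑ ξ ∈ w.sublists.toFinset.filter (fun ξ => ξ ≠ []), (occ w ξ) ^ 2

/-- `Λ(w) = max{|η|²(ℓ+1)³ : η nonempty, ℓ ≥ 1, η^ℓ a factor of w}`. -/
noncomputable def Lam (w : List Bool) : ℕ :=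
  sSup {m | ∃ η ℓ, η ≠ ([] : List Bool) ∧ 1 ≤ ℓ ∧ wpow η ℓ <:+: w ∧
    m = η.length ^ 2 * (ℓ + 1) ^ 3}

/-- A nonempty word is prime (primitive) if it is not a proper power. -/
def IsPrimeWord (η : List Bool) : Prop :=
  η ≠ [] ∧ ∀ ζ ℓ, 2 ≤ ℓ → η ≠ wpow ζ ℓ

/-- `|v|_{ξ,m}`: occurrences of `ξ` in `v` ending in the last `m` positions. -/
def occEnd (v ξ : List Bool) (m : ℕ) : ℕ :=
  ((List.range v.length).filter
    (fun i => ξ.isPrefixOf (v.drop i) && decide (v.length < i + ξ.length + m))).length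

/-- The prefix `x_1 x_2 ⋯ x_n` of the infinite sequence `x`. -/
def pref (x : ℕ → Bool) (n : ℕ) : List Bool := (List.range n).map x
theorem length_filter_range_eq_card (n : ℕ) (p : ℕ → Bool) :
    ((List.range n).filter p).length = ((Finset.range n).filter (fun i => p i)).card := by
  induction n with
  | zero => rfl
  | succ n ih =>
      rw [List.range_succ, List.filter_append, Finset.range_add_one, Finset.filter_insert]
      by_cases h : p n
      · rw [if_pos h, Finset.card_insert_of_notMem (by simp)]
        simp [h, ih]
      · rw [if_neg h]
        simp [h, ih]

theorem wpow_zero (η : List Bool) : wpow η 0 = [] := rfl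
theorem wpow_succ (η : List Bool) (ℓ : ℕ) : wpow η (ℓ+1) = η ++ wpow η ℓ := by
  simp [wpow, List.replicate_succ]
theorem wpow_one (η : List Bool) : wpow η 1 = η := by simp [wpow]
theorem length_wpow (η : List Bool) (ℓ : ℕ) : (wpow η ℓ).length = ℓ * η.length := by
  induction ℓ with
  | zero => simp [wpow_zero]
  | succ n ih => rw [wpow_succ]; simp [ih, Nat.succ_mul, Nat.add_comm]
theorem wpow_add (η : List Bool) (a b : ℕ) : wpow η (a+b) = wpow η a ++ wpow η b := by
  simp only [wpow, List.replicate_add, List.flatten_append]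
theorem wpow_mul (η : List Bool) (a b : ℕ) : wpow (wpow η a) b = wpow η (a*b) := by
  induction b with
  | zero => simp [wpow_zero]
  | succ n ih => rw [wpow_succ, ih, Nat.mul_succ, Nat.add_comm, wpow_add]

theorem occ_card (w ξ : List Bool) :
    occ w ξ = ((Finset.range w.length).filter (fun i => ξ.isPrefixOf (w.drop i))).card :=
  length_filter_range_eq_card _ _
theorem occ_le (w ξ : List Bool) : occ w ξ ≤ w.length := by
  rw [occ_card]
  exact le_trans (Finset.card_filter_le _ _) (by simp)

theorem card_prefix_filter_le (T : Finset (List Bool)) (v : List Bool) (m : ℕ)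
    (hne : ∀ ξ ∈ T, ξ ≠ []) (hlen : ∀ ξ ∈ T, ξ.length ≤ m) :
    (T.filter (fun ξ => ξ.isPrefixOf v)).card ≤ m := by
  have h := Finset.card_le_card_of_injOn (s := T.filter (fun ξ => ξ.isPrefixOf v))
    (f := fun ξ : List Bool => ξ.length) (t := Finset.Icc 1 m) ?_ ?_
  · simpa using h
  · intro ξ hξ
    simp only [Finset.mem_coe, Finset.mem_filter] at hξ
    simp only [Finset.mem_coe, Finset.mem_Icc]
    exact ⟨Nat.one_le_iff_ne_zero.2 (by simpa using hne ξ hξ.1), hlen ξ hξ.1⟩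
  · intro ξ1 h1 ξ2 h2 heq
    simp only [Finset.mem_filter, Finset.mem_coe] at h1 h2
    have p1 : ξ1 <+: v := List.isPrefixOf_iff_prefix.1 h1.2
    have p2 : ξ2 <+: v := List.isPrefixOf_iff_prefix.1 h2.2
    exact (List.prefix_of_prefix_length_le p1 p2 (le_of_eq heq)).eq_of_length heq

theorem sum_occ_le (w : List Bool) (T : Finset (List Bool)) (m : ℕ)
    (hne : ∀ ξ ∈ T, ξ ≠ []) (hlen : ∀ ξ ∈ T, ξ.length ≤ m) :
    ∑ ξ ∈ T, occ w ξ ≤ w.length * m := by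
  calc ∑ ξ ∈ T, occ w ξ
      = ∑ ξ ∈ T, ∑ i ∈ Finset.range w.length,
          (if ξ.isPrefixOf (w.drop i) then 1 else 0) := by
        refine Finset.sum_congr rfl fun ξ _ => ?_
        rw [occ_card, Finset.card_filter]
    _ = ∑ i ∈ Finset.range w.length, ∑ ξ ∈ T,
          (if ξ.isPrefixOf (w.drop i) then 1 else 0) := Finset.sum_comm
    _ ≤ ∑ _i ∈ Finset.range w.length, m := by
        refine Finset.sum_le_sum fun i _ => ?_
        rw [← Finset.card_filter]
        exact card_prefix_filter_le T _ m hne hlen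
    _ = w.length * m := by simp [mul_comm]

theorem kxSum_le (w : List Bool) (m : ℕ)
    (h : ∀ ξ : List Bool, m ≤ ξ.length → occ w ξ ≤ m) :
    kxSum w ≤ 2 * m * w.length ^ 2 := by
  set n := w.length with hn
  set S := w.sublists.toFinset.filter (fun ξ => ξ ≠ []) with hSdef
  have hS : ∀ ξ ∈ S, ξ ≠ [] ∧ ξ.length ≤ n := by
    intro ξ hξ
    simp only [hSdef, Finset.mem_filter, List.mem_toFinset, List.mem_sublists] at hξ
    exact ⟨hξ.2, hξ.1.length_le⟩
  have hsplit : kxSum w = ∑ ξ ∈ S.filter (fun ξ => ξ.length < m), occ w ξ ^ 2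
      + ∑ ξ ∈ S.filter (fun ξ => ¬ ξ.length < m), occ w ξ ^ 2 :=
    (Finset.sum_filter_add_sum_filter_not S _ _).symm
  have h1 : ∑ ξ ∈ S.filter (fun ξ => ξ.length < m), occ w ξ ^ 2 ≤ m * n ^ 2 := by
    calc ∑ ξ ∈ S.filter (fun ξ => ξ.length < m), occ w ξ ^ 2
        ≤ ∑ ξ ∈ S.filter (fun ξ => ξ.length < m), n * occ w ξ := by
          refine Finset.sum_le_sum fun ξ _ => ?_
          rw [pow_two]
          exact Nat.mul_le_mul_right _ (occ_le w ξ)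
      _ = n * ∑ ξ ∈ S.filter (fun ξ => ξ.length < m), occ w ξ := by
          rw [Finset.mul_sum]
      _ ≤ n * (n * m) := by
          refine Nat.mul_le_mul_left _ (sum_occ_le w _ m ?_ ?_)
          · intro ξ hξ; exact (hS ξ (Finset.filter_subset _ _ hξ)).1
          · intro ξ hξ
            exact le_of_lt (Finset.mem_filter.1 hξ).2
      _ = m * n ^ 2 := by ring
  have h2 : ∑ ξ ∈ S.filter (fun ξ => ¬ ξ.length < m), occ w ξ ^ 2 ≤ m * n ^ 2 := by
    calc ∑ ξ ∈ S.filter (fun ξ => ¬ ξ.length < m), occ w ξ ^ 2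
        ≤ ∑ ξ ∈ S.filter (fun ξ => ¬ ξ.length < m), m * occ w ξ := by
          refine Finset.sum_le_sum fun ξ hξ => ?_
          rw [pow_two]
          exact Nat.mul_le_mul_right _ (h ξ (le_of_not_gt (Finset.mem_filter.1 hξ).2))
      _ = m * ∑ ξ ∈ S.filter (fun ξ => ¬ ξ.length < m), occ w ξ := by
          rw [Finset.mul_sum]
      _ ≤ m * (n * n) := by
          refine Nat.mul_le_mul_left _ (sum_occ_le w _ n ?_ ?_)
          · intro ξ hξ; exact (hS ξ (Finset.filter_subset _ _ hξ)).1
          · intro ξ hξ; exact (hS ξ (Finset.filter_subset _ _ hξ)).2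
      _ = m * n ^ 2 := by ring
  have : m * n ^ 2 + m * n ^ 2 = 2 * m * n ^ 2 := by ring
  rw [hsplit]; omega

theorem exists_close_pair {n r : ℕ} (hr : 2 ≤ r) (S : Finset ℕ) (hS : S ⊆ Finset.range n)
    (hcard : r ≤ S.card) :
    ∃ i ∈ S, ∃ j ∈ S, i < j ∧ j - i ≤ (n-1)/(r-1) := by
  set d := (n-1)/(r-1) + 1 with hd
  have hd0 : 0 < d := Nat.succ_pos _
  have hmaps : ∀ i ∈ S, i / d ∈ Finset.range ((n-1)/d + 1) := by
    intro i hi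
    have hin : i < n := Finset.mem_range.1 (hS hi)
    have : i ≤ n - 1 := by omega
    exact Finset.mem_range.2 (Nat.lt_succ_of_le (Nat.div_le_div_right this))
  have hlt : (Finset.range ((n-1)/d + 1)).card < S.card := by
    rw [Finset.card_range]
    have h1 : (n-1)/d < r - 1 := by
      rw [Nat.div_lt_iff_lt_mul hd0]
      have hmod : (n-1) % (r-1) < r - 1 := Nat.mod_lt _ (by omega)
      have hdm : (r-1) * ((n-1)/(r-1)) + (n-1) % (r-1) = n - 1 := Nat.div_add_mod _ _
      have : (r-1) * d = (r-1) * ((n-1)/(r-1)) + (r-1) := by rw [hd, Nat.mul_add, Nat.mul_one]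
      omega
    omega
  obtain ⟨i, hi, j, hj, hne, heq⟩ := Finset.exists_ne_map_eq_of_card_lt_of_maps_to hlt hmaps
  have key : ∀ i j : ℕ, i < j → i / d = j / d → j - i ≤ d - 1 := by
    intro i j hij hq
    have h1 : j < d * (j/d) + d := by
      have := Nat.div_add_mod j d
      have := Nat.mod_lt j hd0
      omega
    rw [← hq] at h1
    have h2 : i / d * d ≤ i := Nat.div_mul_le_self i d
    have h3 : d * (i / d) = i / d * d := Nat.mul_comm _ _
    generalize i / d * d = Q at h1 h2 h3
    omega
  have hdd : d - 1 = (n-1)/(r-1) := by omega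
  rcases Nat.lt_or_ge i j with hlt' | hge
  · exact ⟨i, hi, j, hj, hlt', hdd ▸ key i j hlt' heq⟩
  · have hlt' : j < i := by omega
    exact ⟨j, hj, i, hi, hlt', hdd ▸ key j i hlt' heq.symm⟩

theorem drop_prefix_of_two_occ {w ξ : List Bool} {i j : ℕ} (hij : i < j)
    (h1 : ξ <+: w.drop i) (h2 : ξ <+: w.drop j) (hlt : j - i < ξ.length) :
    ξ.drop (j-i) <+: ξ := by
  set g := j - i with hg
  set K := ξ.length with hK
  have e1 : ξ = (w.drop i).take K := List.prefix_iff_eq_take.1 h1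
  have e2 : ξ = (w.drop j).take K := List.prefix_iff_eq_take.1 h2
  have step : ξ.drop g = (w.drop j).take (K - g) := by
    conv_lhs => rw [e1]
    rw [List.drop_take, List.drop_drop]
    have : i + g = j := by omega
    rw [this]
  rw [step]
  conv_rhs => rw [e2]
  have h := List.take_prefix (K-g) ((w.drop j).take K)
  rw [List.take_take] at h
  have hmin : min (K - g) K = K - g := by omega
  rwa [hmin] at h

theorem wpow_prefix_of_drop_prefix (g : ℕ) (hg : 0 < g) :
    ∀ K, ∀ ξ : List Bool, ξ.length = K → ξ.drop g <+: ξ → wpow (ξ.take g) (ξ.length / g) <+: ξ := by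
  intro K
  induction K using Nat.strong_induction_on with
  | _ K ih =>
  intro ξ hK hp
  rcases Nat.lt_or_ge ξ.length g with hlt | hge
  · rw [Nat.div_eq_of_lt hlt, wpow_zero]
    exact List.nil_prefix
  rcases Nat.lt_or_ge ξ.length (2*g) with hlt2 | hge2
  · have : ξ.length / g = 1 := Nat.div_eq_of_lt_le (by omega) (by omega)
    rw [this, wpow_one]
    exact List.take_prefix _ _
  · set ξ' := ξ.drop g with hξ'
    have hlen' : ξ'.length = ξ.length - g := by simp [hξ']
    have hp' : ξ'.drop g <+: ξ' := by
      have e : ξ' = ξ.take (ξ.length - g) := by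
        rw [← hlen']; exact List.prefix_iff_eq_take.1 hp
      have : ξ'.drop g = ξ'.take (ξ'.length - g) := by
        conv_lhs => rw [e]
        rw [List.drop_take, hlen']
      rw [this]; exact List.take_prefix _ _
    have hih := ih ξ'.length (by omega) ξ' rfl hp'
    have e : ξ' = ξ.take (ξ.length - g) := by
      rw [← hlen']; exact List.prefix_iff_eq_take.1 hp
    have htake : ξ'.take g = ξ.take g := by
      conv_lhs => rw [e]
      rw [List.take_take]
      congr 1
      omega
    rw [htake] at hih
    have hdiv : ξ.length / g = ξ'.length / g + 1 := by
      rw [Nat.div_eq_sub_div hg hge, hlen']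
    rw [hdiv, wpow_succ]
    obtain ⟨t, ht⟩ := hih
    refine ⟨t, ?_⟩
    rw [List.append_assoc, ht, hξ', List.take_append_drop]

theorem wpow_nil (ℓ : ℕ) : wpow [] ℓ = [] := by simp [wpow]

theorem exists_prime_root :
    ∀ K, ∀ u : List Bool, u.length = K → u ≠ [] →
      ∃ η m, IsPrimeWord η ∧ 1 ≤ m ∧ u = wpow η m ∧ η.length ≤ u.length := by
  intro K
  induction K using Nat.strong_induction_on with
  | _ K ih =>
  intro u hK hu
  by_cases hP : IsPrimeWord u
  · exact ⟨u, 1, hP, le_refl 1, (wpow_one u).symm, le_refl _⟩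
  · rw [IsPrimeWord, not_and_or] at hP
    rcases hP with h | h
    · exact absurd hu (by simpa using h)
    · push_neg at h
      obtain ⟨ζ, ℓ, hℓ, hueq⟩ := h
      have hζ : ζ ≠ [] := by
        rintro rfl
        rw [wpow_nil] at hueq
        exact hu hueq
      have hζlen : 0 < ζ.length := List.length_pos_iff.2 hζ
      have hulen : u.length = ℓ * ζ.length := by rw [hueq, length_wpow]
      have hlt : ζ.length < K := by
        rw [← hK] at *
        have : 2 * ζ.length ≤ ℓ * ζ.length := Nat.mul_le_mul_right _ hℓ
        omega
      obtain ⟨η, m', hprime, hm', hζeq, hηlen⟩ := ih ζ.length hlt ζ rfl hζ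
      refine ⟨η, m' * ℓ, hprime, Nat.mul_pos hm' (by omega), ?_, ?_⟩
      · rw [hueq, hζeq, wpow_mul]
      · calc η.length ≤ ζ.length := hηlen
          _ ≤ u.length := by omega

theorem prefix_drop_isInfix {ξ w : List Bool} {i : ℕ} (h : ξ <+: w.drop i) : ξ <:+: w :=
  h.isInfix.trans (List.drop_suffix i w).isInfix

theorem key_lemma (a : ℕ) (ha : 1 ≤ a) (w : List Bool) (hn : 3*a^2 ≤ w.length)
    (hkx : 3 * w.length^3 ≤ a * kxSum w) :
    ∃ η, IsPrimeWord η ∧ η.length ≤ 2*a ∧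
      ∃ ℓ, w.length / (2*a^2) ≤ ℓ ∧ wpow η ℓ <:+: w := by
  set n := w.length with hn'
  set m := n / a with hm
  have ha0 : 0 < a := ha
  have hn1 : 1 ≤ n := by nlinarith [hn, ha0]
  have hma : 3*a ≤ m := by
    rw [hm, Nat.le_div_iff_mul_le ha0]
    calc 3*a*a = 3*a^2 := by ring
      _ ≤ n := hn
  have ham : a * m ≤ n := by rw [hm, Nat.mul_comm]; exact Nat.div_mul_le_self n a
  have hnam : n < a * m + a := by
    have h1 := Nat.div_add_mod n a
    have h2 : n % a < a := Nat.mod_lt _ ha0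
    rw [hm]; omega
  -- Step A
  have hA : ∃ ξ : List Bool, m ≤ ξ.length ∧ m + 1 ≤ occ w ξ := by
    by_contra hcon
    push_neg at hcon
    have hb := kxSum_le w m (fun ξ hξ => by have := hcon ξ hξ; omega)
    have h1 : a * kxSum w ≤ 2 * (a * m) * n^2 := by
      calc a * kxSum w ≤ a * (2*m*n^2) := Nat.mul_le_mul_left _ hb
        _ = 2*(a*m)*n^2 := by ring
    have h2 : 2*(a*m)*n^2 ≤ 2*n*n^2 := by
      have := Nat.mul_le_mul_right (n^2) (Nat.mul_le_mul_left 2 ham)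
      simpa [Nat.mul_assoc] using this
    have hpos : 0 < n^3 := by positivity
    have h3 : 2*n*n^2 < 3*n^3 := by nlinarith
    exact Nat.lt_irrefl _ (lt_of_le_of_lt (le_trans hkx (le_trans h1 h2)) h3)
  obtain ⟨ξ, hξlen, hξocc⟩ := hA
  set S := (Finset.range n).filter (fun i => ξ.isPrefixOf (w.drop i)) with hS
  have hcard : m + 1 ≤ S.card := by
    rw [hS]
    exact le_trans hξocc (le_of_eq (occ_card w ξ))
  obtain ⟨i, hi, j, hj, hij, hgap⟩ :=
    exists_close_pair (by omega) S (Finset.filter_subset _ _) hcard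
  rw [hS, Finset.mem_filter] at hi hj
  have hocc_i : ξ <+: w.drop i := List.isPrefixOf_iff_prefix.1 hi.2
  have hocc_j : ξ <+: w.drop j := List.isPrefixOf_iff_prefix.1 hj.2
  set g := j - i with hg
  have hg1 : 0 < g := by omega
  have hgm : g ≤ (n-1)/m := by simpa using hgap
  have hm0 : 0 < m := by omega
  have hgm2 : g < m := by
    have k1 : 3*(a*m) ≤ m*m := by
      calc 3*(a*m) = (3*a)*m := by ring
        _ ≤ m*m := Nat.mul_le_mul_right m hma
    have k2 : a*1 ≤ a*m := Nat.mul_le_mul_left a hm0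
    have hnm : n ≤ m * m := by nlinarith [hnam, k1, k2]
    have hlast : (n-1)/m < m := by
      rw [Nat.div_lt_iff_lt_mul hm0]
      exact lt_of_lt_of_le (Nat.sub_lt hn1 Nat.one_pos) hnm
    exact lt_of_le_of_lt hgm hlast
  have hg2a : g ≤ 2*a := by
    have h1 : n - 1 ≤ 2*a*m := by
      have k2 : a ≤ a * m := Nat.le_mul_of_pos_right a hm0
      have : 2*a*m = a*m + a*m := by ring
      omega
    calc g ≤ (n-1)/m := hgm
      _ ≤ (2*a*m)/m := Nat.div_le_div_right h1
      _ = 2*a := Nat.mul_div_cancel _ hm0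
  have hper : ξ.drop g <+: ξ := drop_prefix_of_two_occ hij hocc_i hocc_j
    (lt_of_lt_of_le hgm2 hξlen)
  have hpow := wpow_prefix_of_drop_prefix g hg1 ξ.length ξ rfl hper
  set u := ξ.take g with hu
  have hu_len : u.length = g := by
    rw [hu, List.length_take]
    omega
  have hu_ne : u ≠ [] := by
    intro h0
    rw [h0] at hu_len
    simp at hu_len
    omega
  set q := ξ.length / g with hq'
  have hq : n / (2*a^2) ≤ q := by
    have e : n / (2*a^2) = m / (2*a) := by
      rw [hm, Nat.div_div_eq_div_mul]
      congr 1
      ring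
    rw [e, hq']
    exact Nat.div_le_div hξlen hg2a (by omega)
  obtain ⟨η, m', hηprime, hm', hueq, hηlen⟩ := exists_prime_root u.length u rfl hu_ne
  refine ⟨η, hηprime, ?_, m' * q, ?_, ?_⟩
  · calc η.length ≤ u.length := hηlen
      _ = g := hu_len
      _ ≤ 2*a := hg2a
  · calc n / (2*a^2) ≤ q := hq
      _ ≤ m' * q := Nat.le_mul_of_pos_left q hm'
  · have e : wpow η (m' * q) = wpow u q := by rw [hueq, wpow_mul]
    rw [e]
    exact prefix_drop_isInfix (hpow.trans hocc_i)

theorem length_pref (x : ℕ → Bool) (n : ℕ) : (pref x n).length = n := by simp [pref]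

theorem pref_prefix (x : ℕ → Bool) {n m : ℕ} (h : n ≤ m) : pref x n <+: pref x m := by
  have h1 := List.take_prefix n (List.range m)
  rw [List.take_range, min_eq_left h] at h1
  exact h1.map x

theorem frequently_of_finite {α : Type*} {S : Set α} (hS : S.Finite)
    {p : α → ℕ → Prop} (h : ∃ᶠ n in atTop, ∃ i ∈ S, p i n) :
    ∃ i ∈ S, ∃ᶠ n in atTop, p i n := by
  by_contra hc
  push_neg at hc
  have h2 : ∀ᶠ n in atTop, ∀ i ∈ S, ¬ p i n := by
    rw [hS.eventually_all]
    intro i hi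
    have := hc i hi
    exact this
  obtain ⟨n, hn1, hn2⟩ := (h.and_eventually h2).exists
  obtain ⟨i, hi, hp⟩ := hn1
  exact hn2 i hi hp


/-- if `limsup Σ(x_1...x_n)/n³ > 0`, then there are a prime word
`η` and nondecreasing nonnegative integers `ℓ_1 ≤ ℓ_2 ≤ ⋯` with
`η^{ℓ_n} ≺ x_1...x_n` and `limsup ℓ_n/n > 0`. -/
theorem exists_prime_pow_factor (x : ℕ → Bool)
    (h : 0 < atTop.limsup (fun n => (kxSum (pref x n) : ℝ) / (n : ℝ) ^ 3)) :
    ∃ η : List Bool, IsPrimeWord η ∧ ∃ ℓ : ℕ → ℕ, Monotone ℓ ∧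
      (∀ n, wpow η (ℓ n) <:+: pref x n) ∧
      0 < atTop.limsup (fun n => (ℓ n : ℝ) / (n : ℝ)) := by
  set u : ℕ → ℝ := fun n => (kxSum (pref x n) : ℝ) / (n : ℝ) ^ 3 with hu
  have hu0 : ∀ n, 0 ≤ u n := fun n => by positivity
  set ε : ℝ := atTop.limsup u / 2 with hε
  have hε0 : 0 < ε := by positivity
  have hfreq : ∃ᶠ n in atTop, ε < u n := by
    refine frequently_lt_of_lt_limsup (isCoboundedUnder_le_of_le atTop hu0) ?_
    rw [hε]
    linarith
  set a : ℕ := ⌈3/ε⌉₊ with ha'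
  have ha : 1 ≤ a := by
    rw [ha']
    exact Nat.one_le_iff_ne_zero.2 (by positivity : (0:ℕ) < ⌈3/ε⌉₊).ne'
  have haε : 3 ≤ ε * a := by
    have h1 : 3/ε ≤ (a : ℝ) := Nat.le_ceil _
    calc (3:ℝ) = ε * (3/ε) := by field_simp
      _ ≤ ε * a := by nlinarith
  -- frequently good n
  have hgood : ∃ᶠ n in atTop, ∃ η ∈ {η : List Bool | η.length ≤ 2*a},
      IsPrimeWord η ∧ ∃ ℓ, n/(2*a^2) ≤ ℓ ∧ wpow η ℓ <:+: pref x n := by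
    refine ((hfreq.and_eventually (eventually_ge_atTop (4*a^2))).mono ?_)
    rintro n ⟨hn1, hn2⟩
    have hn4 : 4*a^2 ≤ n := hn2
    have ha2 : 1 ≤ a^2 := Nat.one_le_pow _ _ ha
    have hnpos : 0 < n := by omega
    have hkx : 3 * n^3 ≤ a * kxSum (pref x n) := by
      have hn3 : (0:ℝ) < (n:ℝ)^3 := by positivity
      have h1 : ε * n^3 < (kxSum (pref x n) : ℝ) := by
        rw [hu] at hn1
        calc ε * (n:ℝ)^3 < ((kxSum (pref x n):ℝ) / (n:ℝ)^3) * (n:ℝ)^3 := by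
              apply mul_lt_mul_of_pos_right hn1 hn3
          _ = (kxSum (pref x n):ℝ) := by field_simp
      have h2 : (3:ℝ) * n^3 ≤ (a:ℝ) * kxSum (pref x n) := by
        calc (3:ℝ) * n^3 ≤ (ε * a) * n^3 := by nlinarith
          _ = (a:ℝ) * (ε * n^3) := by ring
          _ ≤ (a:ℝ) * kxSum (pref x n) := by
              apply mul_le_mul_of_nonneg_left (le_of_lt h1) (by positivity)
      exact_mod_cast h2
    have hlen : 3*a^2 ≤ (pref x n).length := by rw [length_pref]; omega
    obtain ⟨η, hp, hl, ℓ, hℓ, hinf⟩ := key_lemma a ha (pref x n)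
      hlen (by rwa [length_pref])
    rw [length_pref] at hℓ
    exact ⟨η, hl, hp, ℓ, hℓ, hinf⟩
  obtain ⟨η, _, hη⟩ := frequently_of_finite (List.finite_length_le Bool (2*a)) hgood
  have hprime : IsPrimeWord η := (hη.exists).choose_spec.1
  have hηpos : 0 < η.length := List.length_pos_iff.2 hprime.1
  classical
  set P : ℕ → ℕ → Prop := fun n ℓ => wpow η ℓ <:+: pref x n with hP
  set L : ℕ → ℕ := fun n => Nat.findGreatest (P n) n with hL
  have hP0 : ∀ n, P n 0 := fun n => by show wpow η 0 <:+: pref x n; rw [wpow_zero]; exact List.nil_infix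
  have hself : ∀ n, wpow η (L n) <:+: pref x n := fun n =>
    Nat.findGreatest_spec (Nat.zero_le n) (hP0 n)
  have hmono : Monotone L := by
    intro n m hnm
    refine Nat.le_findGreatest (le_trans (Nat.findGreatest_le n) hnm) ?_
    exact (hself n).trans (pref_prefix x hnm).isInfix
  have hLbig : ∃ᶠ n in atTop, (1:ℝ)/(4*a^2) ≤ (L n : ℝ) / n := by
    refine (hη.and_eventually (eventually_ge_atTop (4*a^2))).mono ?_
    rintro n ⟨⟨-, ℓ, hℓ1, hℓ2⟩, hn4⟩
    have ha2 : 1 ≤ a^2 := Nat.one_le_pow _ _ ha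
    have hnpos : 0 < n := by omega
    have hℓn : ℓ ≤ n := by
      have h1 : ℓ * η.length ≤ n := by
        have := hℓ2.length_le
        rwa [length_wpow, length_pref] at this
      calc ℓ = ℓ * 1 := (Nat.mul_one ℓ).symm
        _ ≤ ℓ * η.length := Nat.mul_le_mul_left ℓ hηpos
        _ ≤ n := h1
    have hLn : n / (2*a^2) ≤ L n := le_trans hℓ1 (Nat.le_findGreatest hℓn hℓ2)
    -- show n ≤ 4*a^2 * L n
    have hkey : n ≤ 4*a^2 * L n := by
      set B := 2*a^2 with hB
      have hB0 : 0 < B := by omega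
      have h1 := Nat.div_add_mod n B
      have h2 : n % B < B := Nat.mod_lt _ hB0
      have h3 : B * (n / B) ≤ B * L n := Nat.mul_le_mul_left B hLn
      have h4 : n ≤ 2 * (B * (n / B)) := by
        have hn2B : 2 * B ≤ n := by omega
        generalize B * (n / B) = Q at h1 ⊢
        omega
      calc n ≤ 2 * (B * (n / B)) := h4
        _ ≤ 2 * (B * L n) := by omega
        _ = 4*a^2 * L n := by rw [hB]; ring
    rw [div_le_div_iff₀ (by positivity) (by exact_mod_cast hnpos)]
    have : (n:ℝ) ≤ 4*a^2 * L n := by exact_mod_cast hkey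
    calc (1:ℝ) * n = (n:ℝ) := by ring
      _ ≤ 4*a^2 * L n := this
      _ = (L n:ℝ) * (4*a^2) := by ring
  refine ⟨η, hprime, L, hmono, hself, ?_⟩
  have hbdd : IsBoundedUnder (· ≤ ·) atTop (fun n => (L n : ℝ) / n) := by
    refine isBoundedUnder_of ⟨1, fun n => ?_⟩
    rcases Nat.eq_zero_or_pos n with rfl | hn
    · simp
    · rw [div_le_one (by exact_mod_cast hn)]
      exact_mod_cast Nat.findGreatest_le n
  have hfinal := le_limsup_of_frequently_le hLbig hbdd
  have : (0:ℝ) < 1/(4*a^2) := by positivity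
  linarith
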